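/- Let ω ∈ ℝ and γ > 0. Define Φ(x) = 1 + γ∫₀ˣ cosh²(ωt) dt and V(x) = −2 (d/dx)(γcosh²(ωx)/Φ(x)) for x ≥ 0. Then (3/16)∫₀^∞ V(x)² dx = (1/4)γ³ − (3/4)γω² + |ω|³. -/

import Mathlib

open MeasureTheory Set

/-- One-sided derivative on `[0, ∞)`. -/
noncomputable def D (f : ℝ → ℝ) : ℝ → ℝ := derivWithin f (Set.Ici 0)

section Aux

open Real Filter

private lemma key_lemma
    (ω γ : ℝ) (hω : 0 ≤ ω) (hγ : 0 < γ)
    (Φ : ℝ → ℝ) (hΦ : ∀ x, Φ x = 1 + γ * ∫ t in (0:ℝ)..x, Real.cosh (ω * t) ^ 2)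
    (V : ℝ → ℝ) (hV : ∀ x ∈ Set.Ici (0:ℝ),
      V x = -2 * D (fun y => γ * Real.cosh (ω * y) ^ 2 / Φ y) x) :
    3/16 * (∫ x in Set.Ioi (0:ℝ), (V x) ^ 2)
      = 1/4 * γ ^ 3 - 3/4 * γ * ω ^ 2 + ω ^ 3 := by
  set u : ℝ → ℝ := fun x => γ * Real.cosh (ω * x) ^ 2 with hu_def
  set w : ℝ → ℝ := fun x => 2 * γ * ω * Real.cosh (ω * x) * Real.sinh (ω * x) with hw_def
  set F : ℝ → ℝ := fun x =>
      -4/3 * (u x) ^ 3 / (Φ x) ^ 3 + 2 * u x * w x / (Φ x) ^ 2 + 4 * ω ^ 2 * γ / Φ x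
    with hF_def
  -- continuity of the integrand
  have hcont : Continuous (fun t : ℝ => Real.cosh (ω * t) ^ 2) :=
    (Real.continuous_cosh.comp (continuous_const.mul continuous_id)).pow 2
  -- derivative of Φ
  have hΦd : ∀ x : ℝ, HasDerivAt Φ (u x) x := by
    intro x
    have h1 : HasDerivAt (fun b : ℝ => ∫ t in (0:ℝ)..b, Real.cosh (ω * t) ^ 2)
        (Real.cosh (ω * x) ^ 2) x :=
      intervalIntegral.integral_hasDerivAt_right (hcont.intervalIntegrable _ _)
        (hcont.stronglyMeasurableAtFilter _ _) hcont.continuousAt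
    have h2 := (h1.const_mul γ).const_add 1
    have : Φ = fun b => 1 + γ * ∫ t in (0:ℝ)..b, Real.cosh (ω * t) ^ 2 := funext hΦ
    rw [this]
    simpa [hu_def] using h2
  -- positivity of Φ on [0, ∞)
  have hΦ1 : ∀ x : ℝ, 0 ≤ x → 1 ≤ Φ x := by
    intro x hx
    have h0 : (0:ℝ) ≤ ∫ t in (0:ℝ)..x, Real.cosh (ω * t) ^ 2 :=
      intervalIntegral.integral_nonneg hx (fun t _ => sq_nonneg _)
    rw [hΦ x]
    nlinarith
  -- derivative of u
  have hud : ∀ x : ℝ, HasDerivAt u (w x) x := by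
    intro x
    have h1 : HasDerivAt (fun y : ℝ => Real.cosh (ω * y)) (Real.sinh (ω * x) * ω) x :=
      (Real.hasDerivAt_cosh (ω * x)).comp x (by simpa using (hasDerivAt_id x).const_mul ω)
    have h2 := (h1.pow 2).const_mul γ
    simp only [hu_def, hw_def]
    convert (show HasDerivAt (F := ℝ) _ _ x from h2) using 1
    · rfl
    push_cast
    ring
  -- derivative of w
  have hwd : ∀ x : ℝ, HasDerivAt w
      (2 * γ * ω ^ 2 * (Real.sinh (ω * x) ^ 2 + Real.cosh (ω * x) ^ 2)) x := by
    intro x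
    have hc : HasDerivAt (fun y : ℝ => Real.cosh (ω * y)) (Real.sinh (ω * x) * ω) x :=
      (Real.hasDerivAt_cosh (ω * x)).comp x (by simpa using (hasDerivAt_id x).const_mul ω)
    have hs : HasDerivAt (fun y : ℝ => Real.sinh (ω * y)) (Real.cosh (ω * x) * ω) x :=
      (Real.hasDerivAt_sinh (ω * x)).comp x (by simpa using (hasDerivAt_id x).const_mul ω)
    have h2 := ((hc.mul hs).const_mul (2 * γ * ω))
    simp only [hw_def]
    have hfe : (fun x => 2 * γ * ω * Real.cosh (ω * x) * Real.sinh (ω * x))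
        = fun x => 2 * γ * ω * (Real.cosh (ω * x) * Real.sinh (ω * x)) := by
      funext y; ring
    rw [hfe]
    convert (show HasDerivAt (F := ℝ) _ _ x from h2) using 1
    · rfl
    ring
  -- explicit formula for V
  have hVx : ∀ x ∈ Set.Ici (0:ℝ),
      V x = -2 * ((w x * Φ x - u x * u x) / (Φ x) ^ 2) := by
    intro x hx
    have hne : Φ x ≠ 0 := by have := hΦ1 x hx; linarith
    have hD : HasDerivAt (fun y => γ * Real.cosh (ω * y) ^ 2 / Φ y)
        ((w x * Φ x - u x * u x) / (Φ x) ^ 2) x := by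
      have := (show HasDerivAt (F := ℝ) _ _ x from (hud x).div (hΦd x) hne)
      exact this
    rw [hV x hx, D, (hD.hasDerivWithinAt).derivWithin (uniqueDiffOn_Ici (0:ℝ) x hx)]
  -- derivative of F is V²
  have hFd : ∀ x ∈ Set.Ici (0:ℝ), HasDerivAt F ((V x) ^ 2) x := by
    intro x hx
    have hne : Φ x ≠ 0 := by have := hΦ1 x hx; linarith
    have hW2 : (w x) ^ 2 = 4 * ω ^ 2 * u x * (u x - γ) := by
      have hs := Real.sinh_sq (ω * x)
      simp only [hu_def, hw_def]
      linear_combination (4 * γ ^ 2 * ω ^ 2 * Real.cosh (ω * x) ^ 2) * hs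
    have h1 : HasDerivAt (fun y => -4/3 * (u y) ^ 3 / (Φ y) ^ 3)
        ((-4/3 * (3 * (u x) ^ 2 * w x) * (Φ x) ^ 3
          - (-4/3 * (u x) ^ 3) * (3 * (Φ x) ^ 2 * u x)) / ((Φ x) ^ 3) ^ 2) x := by
      have hn := ((hud x).pow 3).const_mul (-4/3 : ℝ)
      have hd := (hΦd x).pow 3
      have := hn.div hd (pow_ne_zero 3 hne)
      convert (show HasDerivAt (F := ℝ) _ _ x from this) using 1
      · rfl
      simp only [Pi.pow_apply]
      norm_num
    have h2 : HasDerivAt (fun y => 2 * u y * w y / (Φ y) ^ 2)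
        (((2 * (w x * w x + u x * (2 * γ * ω ^ 2 * (Real.sinh (ω * x) ^ 2
            + Real.cosh (ω * x) ^ 2)))) * (Φ x) ^ 2
          - (2 * u x * w x) * (2 * (Φ x) ^ 1 * u x)) / ((Φ x) ^ 2) ^ 2) x := by
      have hn := ((hud x).mul (hwd x)).const_mul (2 : ℝ)
      have hd := (hΦd x).pow 2
      have h0 := hn.div hd (pow_ne_zero 2 hne)
      have hfe : (fun y => 2 * u y * w y / Φ y ^ 2)
          = fun y => 2 * (u y * w y) / Φ y ^ 2 := by
        funext y; ring
      rw [hfe]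
      convert (show HasDerivAt (F := ℝ) _ _ x from h0) using 1
      · rfl
      simp only [Pi.pow_apply, Pi.mul_apply]
      push_cast
      ring
    have h3 : HasDerivAt (fun y => 4 * ω ^ 2 * γ / Φ y)
        ((0 * Φ x - 4 * ω ^ 2 * γ * u x) / (Φ x) ^ 2) x := by
      exact (hasDerivAt_const x (4 * ω ^ 2 * γ)).div (hΦd x) hne
    have hsum := (h1.add h2).add h3
    convert (show HasDerivAt (F := ℝ) _ _ x from hsum) using 1
    · rfl
    rw [hVx x hx]
    have hw' : 2 * γ * ω ^ 2 * (Real.sinh (ω * x) ^ 2 + Real.cosh (ω * x) ^ 2)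
        = 2 * ω ^ 2 * (2 * u x - γ) := by
      have hs := Real.sinh_sq (ω * x)
      simp only [hu_def]
      linear_combination (2 * γ * ω ^ 2) * hs
    rw [hw']
    have hs := Real.sinh_sq (ω * x)
    simp only [hu_def, hw_def]
    field_simp
    ring_nf
    linear_combination (8 * γ ^ 2 * ω ^ 2 * Real.cosh (ω * x) ^ 2 * Φ x ^ 2) * hs
  -- limit of F at infinity
  have hlim : Filter.Tendsto F Filter.atTop (nhds (16/3 * ω ^ 3)) := by
    rcases hω.eq_or_lt with hω0 | hωpos
    · -- case ω = 0
      have hΦx : ∀ x : ℝ, Φ x = 1 + γ * x := by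
        intro x
        rw [hΦ x, ← hω0]
        simp
      have hΦtop : Filter.Tendsto Φ Filter.atTop Filter.atTop := by
        have h1 : Filter.Tendsto (fun x : ℝ => 1 + γ * x) Filter.atTop Filter.atTop :=
          Filter.tendsto_atTop_add_const_left _ 1
            (Filter.Tendsto.const_mul_atTop hγ Filter.tendsto_id)
        exact h1.congr (fun x => (hΦx x).symm)
      have hinv : Filter.Tendsto (fun x => (Φ x)⁻¹) Filter.atTop (nhds 0) :=
        hΦtop.inv_tendsto_atTop
      have h2 := (hinv.pow 3).const_mul (-4/3 * γ ^ 3)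
      have hFeq : ∀ x : ℝ, -4/3 * γ ^ 3 * ((Φ x)⁻¹) ^ 3 = F x := by
        intro x
        simp only [hF_def, hu_def, hw_def, ← hω0]
        simp [Real.sinh_zero]
        ring
      have h3 := h2.congr hFeq
      rw [← hω0]
      convert h3 using 2
      norm_num
    · -- case ω > 0
      have hωne : ω ≠ 0 := ne_of_gt hωpos
      have hΦx : ∀ x : ℝ, Φ x = 1 + γ * (x / 2 + Real.sinh (2*ω*x) / (4*ω)) := by
        intro x
        rw [hΦ x]
        congr 1
        congr 1
        have hG : ∀ t ∈ Set.uIcc (0:ℝ) x,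
            HasDerivAt (fun t => t/2 + Real.sinh (2*ω*t)/(4*ω)) (Real.cosh (ω*t)^2) t := by
          intro t _
          have h1 : HasDerivAt (fun t : ℝ => t/2) (1/2) t := (hasDerivAt_id t).div_const 2
          have hl : HasDerivAt (fun t : ℝ => 2*ω*t) (2*ω) t := by
            simpa using (hasDerivAt_id t).const_mul (2*ω)
          have h2 : HasDerivAt (fun t : ℝ => Real.sinh (2*ω*t))
              (Real.cosh (2*ω*t) * (2*ω)) t := (Real.hasDerivAt_sinh (2*ω*t)).comp t hl
          have h3 := h1.add (h2.div_const (4*ω))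
          convert (show HasDerivAt (F := ℝ) _ _ t from h3) using 1
          · rfl
          have hc2 := Real.cosh_two_mul (ω*t)
          have hs2 := Real.sinh_sq (ω*t)
          rw [show 2*ω*t = 2*(ω*t) by ring, hc2]
          field_simp
          linear_combination (-4) * hs2
        have hIcont : IntervalIntegrable (fun t => Real.cosh (ω*t)^2)
            MeasureTheory.volume 0 x := hcont.intervalIntegrable 0 x
        rw [intervalIntegral.integral_eq_sub_of_hasDerivAt hG hIcont]
        simp [Real.sinh_zero]
      set X : ℝ → ℝ := fun x => Real.exp (2*ω*x) with hX_def
      have hXtop : Filter.Tendsto X Filter.atTop Filter.atTop :=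
        Real.tendsto_exp_atTop.comp
          (Filter.Tendsto.const_mul_atTop (by positivity : (0:ℝ) < 2*ω) Filter.tendsto_id)
      have hEinv : Filter.Tendsto (fun x => (X x)⁻¹) Filter.atTop (nhds 0) :=
        hXtop.inv_tendsto_atTop
      have hxE : Filter.Tendsto (fun x => x * (X x)⁻¹) Filter.atTop (nhds 0) := by
        have h1 := (Real.tendsto_pow_mul_exp_neg_atTop_nhds_zero 1).comp
          (Filter.Tendsto.const_mul_atTop (show (0:ℝ) < 2*ω by positivity) Filter.tendsto_id)
        have h2 := h1.const_mul (1/(2*ω))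
        have h3 : Filter.Tendsto (fun x : ℝ => 1/(2*ω) * ((2*ω*x)^1 * Real.exp (-(2*ω*x))))
            Filter.atTop (nhds 0) := by simpa using h2
        refine h3.congr (fun x => ?_)
        rw [Real.exp_neg]
        simp only [hX_def, pow_one]
        field_simp
      set den : ℝ → ℝ := fun x => 4*ω*(X x)⁻¹ + 2*γ*ω*(x*(X x)⁻¹) + γ*(1 - ((X x)⁻¹)^2)/2
        with hden_def
      set num1 : ℝ → ℝ := fun x => γ*ω*(((X x)⁻¹)^2 + 2*(X x)⁻¹ + 1) with hnum1_def
      set num2 : ℝ → ℝ := fun x => 2*γ*ω^2*(1 - ((X x)⁻¹)^2) with hnum2_def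
      have hXne : ∀ x : ℝ, X x ≠ 0 := fun x => (Real.exp_pos _).ne'
      have h4ne : ∀ x : ℝ, 4*ω*(X x)⁻¹ ≠ 0 := by
        intro x
        have := Real.exp_pos (2*ω*x)
        simp only [hX_def]
        positivity
      have hDen : ∀ x : ℝ, den x = 4*ω*(X x)⁻¹ * Φ x := by
        intro x
        have hexp := Real.exp_pos (2*ω*x)
        simp only [hden_def, hX_def, hΦx x]
        rw [Real.sinh_eq, Real.exp_neg]
        field_simp
        ring
      have hU : ∀ x : ℝ, 4*ω*(X x)⁻¹ * u x = num1 x := by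
        intro x
        have hexp := Real.exp_pos (2*ω*x)
        have hc2 : Real.cosh (ω*x)^2 = (Real.cosh (2*(ω*x)) + 1)/2 := by
          have h1 := Real.cosh_two_mul (ω*x)
          have h2 := Real.sinh_sq (ω*x)
          linarith
        simp only [hu_def, hnum1_def, hX_def]
        rw [hc2, Real.cosh_eq, Real.exp_neg, show (2:ℝ)*(ω*x) = 2*ω*x by ring]
        field_simp
        ring
      have hW : ∀ x : ℝ, 4*ω*(X x)⁻¹ * w x = num2 x := by
        intro x
        have hexp := Real.exp_pos (2*ω*x)
        simp only [hw_def, hnum2_def, hX_def]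
        rw [show 2*γ*ω*Real.cosh (ω*x)*Real.sinh (ω*x)
              = γ*ω*(2*Real.sinh (ω*x)*Real.cosh (ω*x)) by ring,
            ← Real.sinh_two_mul, Real.sinh_eq, Real.exp_neg,
            show (2:ℝ)*(ω*x) = 2*ω*x by ring]
        field_simp
        ring
      have hden_lim : Filter.Tendsto den Filter.atTop (nhds (γ/2)) := by
        have h := ((hEinv.const_mul (4*ω)).add (hxE.const_mul (2*γ*ω))).add
          ((((hEinv.pow 2).const_sub 1).const_mul γ).div_const 2)
        rw [hden_def]
        convert h using 2
        norm_num
      have hden_ne : γ/2 ≠ 0 := by positivity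
      have hnum1_lim : Filter.Tendsto num1 Filter.atTop (nhds (γ*ω)) := by
        have h := (((hEinv.pow 2).add (hEinv.const_mul 2)).add
          (tendsto_const_nhds (x := (1:ℝ)))).const_mul (γ*ω)
        rw [hnum1_def]
        convert h using 2
        norm_num
      have hnum2_lim : Filter.Tendsto num2 Filter.atTop (nhds (2*γ*ω^2)) := by
        have h := (((hEinv.pow 2).const_sub 1)).const_mul (2*γ*ω^2)
        rw [hnum2_def]
        convert h using 2
        norm_num
      have hL1 : Filter.Tendsto (fun x => u x / Φ x) Filter.atTop (nhds (2*ω)) := by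
        have h := hnum1_lim.div hden_lim hden_ne
        have he : ∀ x : ℝ, num1 x / den x = u x / Φ x := by
          intro x
          rw [hDen x, ← hU x, mul_div_mul_left _ _ (h4ne x)]
        have hv : γ*ω/(γ/2) = 2*ω := by field_simp
        rw [hv] at h
        exact h.congr he
      have hL2 : Filter.Tendsto (fun x => w x / Φ x) Filter.atTop (nhds (4*ω^2)) := by
        have h := hnum2_lim.div hden_lim hden_ne
        have he : ∀ x : ℝ, num2 x / den x = w x / Φ x := by
          intro x
          rw [hDen x, ← hW x, mul_div_mul_left _ _ (h4ne x)]
        have hv : 2*γ*ω^2/(γ/2) = 4*ω^2 := by field_simp; ring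
        rw [hv] at h
        exact h.congr he
      have hL3 : Filter.Tendsto (fun x => (Φ x)⁻¹) Filter.atTop (nhds 0) := by
        have h := (hEinv.const_mul (4*ω)).div hden_lim hden_ne
        have he : ∀ x : ℝ, (4*ω*(X x)⁻¹) / den x = (Φ x)⁻¹ := by
          intro x
          rw [hDen x]
          rw [show 4*ω*(X x)⁻¹ / (4*ω*(X x)⁻¹ * Φ x)
                = (4*ω*(X x)⁻¹ * 1) / (4*ω*(X x)⁻¹ * Φ x) by rw [mul_one],
              mul_div_mul_left _ _ (h4ne x), one_div]
        have hv : 4*ω*(0:ℝ)/(γ/2) = 0 := by ring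
        rw [hv] at h
        exact h.congr he
      have hFeq : ∀ x : ℝ,
          -4/3*(u x/Φ x)^3 + 2*(u x/Φ x)*(w x/Φ x) + 4*ω^2*γ*(Φ x)⁻¹ = F x := by
        intro x
        simp only [hF_def]
        ring
      have h := (((hL1.pow 3).const_mul (-4/3 : ℝ)).add ((hL1.const_mul 2).mul hL2)).add
        (hL3.const_mul (4*ω^2*γ))
      have hval : -4/3*(2*ω)^3 + 2*(2*ω)*(4*ω^2) + 4*ω^2*γ*0 = 16/3*ω^3 := by ring
      rw [hval] at h
      exact h.congr hFeq
  -- nonnegativity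
  have hpos : ∀ x ∈ Set.Ioi (0:ℝ), (0:ℝ) ≤ (V x) ^ 2 := fun x _ => sq_nonneg _
  have hint := integral_Ioi_of_hasDerivAt_of_nonneg' hFd hpos hlim
  rw [hint]
  have hΦ0 : Φ 0 = 1 := by rw [hΦ 0]; simp
  have hF0 : F 0 = -4/3 * γ ^ 3 + 4 * ω ^ 2 * γ := by
    simp only [hF_def, hu_def, hw_def, hΦ0, mul_zero, Real.cosh_zero, Real.sinh_zero]
    norm_num
  rw [hF0]
  ring

end Aux

/-- Explicit computation of `(3/16)∫₀^∞ V²` for the potential obtained by inserting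
the eigenvalue `-ω²` into the free Neumann half-line Schrödinger operator via the
double commutation method. -/
theorem integral_V_squared_example
    (ω γ : ℝ) (hγ : 0 < γ)
    (Φ : ℝ → ℝ) (hΦ : ∀ x, Φ x = 1 + γ * ∫ t in (0:ℝ)..x, Real.cosh (ω * t) ^ 2)
    (V : ℝ → ℝ) (hV : ∀ x ∈ Set.Ici (0:ℝ),
      V x = -2 * D (fun y => γ * Real.cosh (ω * y) ^ 2 / Φ y) x) :
    3/16 * (∫ x in Set.Ioi (0:ℝ), (V x) ^ 2)
      = 1/4 * γ ^ 3 - 3/4 * γ * ω ^ 2 + |ω| ^ 3 := by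
  have hc : ∀ y : ℝ, Real.cosh (|ω| * y) = Real.cosh (ω * y) := by
    intro y
    rcases abs_cases ω with ⟨h, _⟩ | ⟨h, _⟩ <;> rw [h]
    rw [neg_mul, Real.cosh_neg]
  have hfun : (fun y => γ * Real.cosh (|ω| * y) ^ 2 / Φ y)
      = (fun y => γ * Real.cosh (ω * y) ^ 2 / Φ y) := by
    funext y; rw [hc]
  have h := key_lemma |ω| γ (abs_nonneg ω) hγ Φ
    (by intro x; rw [hΦ x]; simp only [hc])
    V (by intro x hx; rw [hV x hx, hfun])
  rw [sq_abs] at h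
  exact h
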